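/- For the cubic threefold X ⊂ P^4 defined by F = x_0 x_1 x_2 + x_0^2 x_4 + x_1^2 x_3, the closure of a general fiber of the Gauss map is a line, and the locus of intersection points of these lines with Sing(X) is the conic {x_2^2 − 4 x_3 x_4 = 0} inside the plane Sing(X) = {x_0 = x_1 = 0}. -/

import Mathlib

open MvPolynomial

noncomputable section

variable {σ : Type*}

/-- The common zero locus of a set of polynomials. -/
def zLocus (I : Set (MvPolynomial σ ℂ)) : Set (σ → ℂ) :=
  {x | ∀ f ∈ I, eval x f = 0}

/-- A set is algebraic if it is a common zero locus of polynomials. -/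
def IsAlg (S : Set (σ → ℂ)) : Prop :=
  ∃ I : Set (MvPolynomial σ ℂ), S = zLocus I

/-- Zariski closure. -/
def zcl (S : Set (σ → ℂ)) : Set (σ → ℂ) :=
  ⋂₀ {T | IsAlg T ∧ S ⊆ T}

/-- Irreducibility of a set with respect to algebraic subsets. -/
def IsIrredV (S : Set (σ → ℂ)) : Prop :=
  S.Nonempty ∧ ∀ T₁ T₂ : Set (σ → ℂ), IsAlg T₁ → IsAlg T₂ →
    S ⊆ T₁ ∪ T₂ → S ⊆ T₁ ∨ S ⊆ T₂

/-- Dimension of (the affine cone over) a variety, via chains of irreducible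
algebraic subsets. For the cone over a projective variety this is
(projective dimension) + 1. -/
def adim (S : Set (σ → ℂ)) : WithBot (WithTop ℕ) :=
  Order.krullDim {T : Set (σ → ℂ) // IsAlg T ∧ IsIrredV T ∧ T ⊆ S}

/-- `S` is (the affine cone over) a projective cone: there is a vertex `v`
such that the line through `v` and any point of `S` stays in `S`. -/
def IsConeV (S : Set (σ → ℂ)) : Prop :=
  ∃ v ∈ S, v ≠ 0 ∧ ∀ x ∈ S, ∀ a b : ℂ, a • v + b • x ∈ S

/-- Secant variety (of cones): closure of the union of lines through pairs of points. -/
def secantV (S : Set (σ → ℂ)) : Set (σ → ℂ) :=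
  zcl {v | ∃ x ∈ S, ∃ y ∈ S, ∃ a b : ℂ, v = a • x + b • y}

/-- The gradient of a polynomial at a point. -/
def gradP [Fintype σ] [DecidableEq σ] (P : MvPolynomial σ ℂ) (v : σ → ℂ) : σ → ℂ :=
  fun i => eval v (pderiv i P)

/-- The singular locus (cone) of the hypersurface defined by `P`. -/
def singLocus [Fintype σ] [DecidableEq σ] (P : MvPolynomial σ ℂ) : Set (σ → ℂ) :=
  {v | ∀ i, eval v (pderiv i P) = 0}

end

/-- The Perazzo cubic threefold `x₀x₁x₂ + x₀²x₄ + x₁²x₃` in `ℙ⁴`. -/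
noncomputable def perazzoCubic : MvPolynomial (Fin 5) ℂ :=
  MvPolynomial.X 0 * MvPolynomial.X 1 * MvPolynomial.X 2
    + MvPolynomial.X 0 ^ 2 * MvPolynomial.X 4 + MvPolynomial.X 1 ^ 2 * MvPolynomial.X 3

/-- The line `[t:u] ↦ [t : at : −bt−2au : u : abt+a²u]` (as a cone in `ℂ⁵`). -/
def perazzoLine (a b t u : ℂ) : Fin 5 → ℂ :=
  ![t, a * t, -(b * t) - 2 * (a * u), u, a * b * t + a ^ 2 * u]

/- ======================= auxiliary lemmas ======================= -/

lemma subset_zcl (S : Set (Fin 5 → ℂ)) : S ⊆ zcl S :=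
  fun x hx => Set.mem_sInter.2 fun _ hT => hT.2 hx

lemma zcl_subset {S T : Set (Fin 5 → ℂ)} (h1 : IsAlg T) (h2 : S ⊆ T) : zcl S ⊆ T :=
  Set.sInter_subset_of_mem ⟨h1, h2⟩

lemma gradP_eq (v : Fin 5 → ℂ) : gradP perazzoCubic v =
    ![v 1 * v 2 + 2 * (v 0 * v 4), v 0 * v 2 + 2 * (v 1 * v 3), v 0 * v 1, v 1 ^ 2, v 0 ^ 2] := by
  funext i
  fin_cases i <;>
    simp [gradP, perazzoCubic, pderiv_mul, pderiv_pow] <;> ring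

lemma eval_line (a b t u : ℂ) : MvPolynomial.eval (perazzoLine a b t u) perazzoCubic = 0 := by
  simp [perazzoCubic, perazzoLine]; ring

lemma grad_line (a b t u : ℂ) : gradP perazzoCubic (perazzoLine a b t u)
    = (t ^ 2) • (![a * b, -b, a, a ^ 2, 1] : Fin 5 → ℂ) := by
  rw [gradP_eq]
  funext i
  fin_cases i <;> simp [perazzoLine] <;> ring

lemma eval_aeval' (f : MvPolynomial (Fin 5) ℂ) (g : Fin 5 → Polynomial ℂ) (s : ℂ) :
    Polynomial.eval s (MvPolynomial.aeval g f) =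
      MvPolynomial.eval (fun i => Polynomial.eval s (g i)) f := by
  induction f using MvPolynomial.induction_on with
  | C c => simp
  | add p q hp hq => simp [hp, hq]
  | mul_X p i hp => simp [hp]

lemma eval_poly_zero (f : MvPolynomial (Fin 5) ℂ) (g : Fin 5 → Polynomial ℂ)
    (h : ∀ s : ℂ, s ≠ 0 → MvPolynomial.eval (fun i => Polynomial.eval s (g i)) f = 0)
    (s : ℂ) : MvPolynomial.eval (fun i => Polynomial.eval s (g i)) f = 0 := by
  have hq : MvPolynomial.aeval g f = 0 := by
    apply Polynomial.eq_zero_of_infinite_isRoot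
    apply Set.Infinite.mono (s := {x : ℂ | x ≠ 0})
    · intro x hx
      exact (eval_aeval' f g x).trans (h x hx)
    · have : ({x : ℂ | x ≠ 0}) = ({0} : Set ℂ)ᶜ := by ext x; simp
      rw [this]
      exact (Set.finite_singleton (0 : ℂ)).infinite_compl
  rw [← eval_aeval' f g s, hq, Polynomial.eval_zero]

lemma perazzoLine_eq (a b t u : ℂ) :
    perazzoLine a b t u = t • perazzoLine a b 1 0 + u • perazzoLine a b 0 1 := by
  funext i; fin_cases i <;> simp [perazzoLine] <;> ring

lemma mem_span_iff (a b : ℂ) (v : Fin 5 → ℂ) :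
    v ∈ Submodule.span ℂ {perazzoLine a b 1 0, perazzoLine a b 0 1} ↔
      (v 1 = a * v 0 ∧ v 2 = -(b * v 0) - 2 * (a * v 3) ∧
        v 4 = a * b * v 0 + a ^ 2 * v 3) := by
  rw [Submodule.mem_span_pair]
  constructor
  · rintro ⟨c, d, rfl⟩
    simp [perazzoLine]; ring_nf; simp
  · rintro ⟨h1, h2, h4⟩
    refine ⟨v 0, v 3, ?_⟩
    funext i
    fin_cases i <;> simp [perazzoLine, h1, h2, h4] <;> ring

lemma isAlg_span (a b : ℂ) :
    IsAlg (↑(Submodule.span ℂ {perazzoLine a b 1 0, perazzoLine a b 0 1}) : Set (Fin 5 → ℂ)) := by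
  classical
  refine ⟨{MvPolynomial.X 1 - MvPolynomial.C a * MvPolynomial.X 0,
    MvPolynomial.X 2 + MvPolynomial.C b * MvPolynomial.X 0 + MvPolynomial.C (2 * a) * MvPolynomial.X 3,
    MvPolynomial.X 4 - MvPolynomial.C (a * b) * MvPolynomial.X 0 - MvPolynomial.C (a ^ 2) * MvPolynomial.X 3}, ?_⟩
  ext v
  simp only [SetLike.mem_coe, mem_span_iff, zLocus, Set.mem_insert_iff, Set.mem_singleton_iff,
    Set.mem_setOf_eq, forall_eq_or_imp, forall_eq, map_add, map_sub, map_mul, eval_C, eval_X]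
  constructor
  · rintro ⟨h1, h2, h4⟩
    refine ⟨by rw [h1]; ring, by rw [h2]; ring, by rw [h4]; ring⟩
  · rintro ⟨h1, h2, h4⟩
    refine ⟨by linear_combination h1, by linear_combination h2, by linear_combination h4⟩

/-- the fiber is contained in the span -/
lemma fiber_subset_span (a b : ℂ) :
    {v : Fin 5 → ℂ | MvPolynomial.eval v perazzoCubic = 0 ∧
        ∃ c : ℂ, c ≠ 0 ∧ gradP perazzoCubic v
          = c • (![a * b, -b, a, a ^ 2, 1] : Fin 5 → ℂ)} ⊆
      ↑(Submodule.span ℂ {perazzoLine a b 1 0, perazzoLine a b 0 1}) := by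
  rintro v ⟨-, c, hc, hg⟩
  rw [gradP_eq] at hg
  have h0 := congrFun hg 0
  have h1 := congrFun hg 1
  have h2 := congrFun hg 2
  have h4 := congrFun hg 4
  simp only [Matrix.cons_val_zero, Matrix.cons_val_one, Matrix.head_cons, Pi.smul_apply,
    smul_eq_mul, Matrix.cons_val_fin_one, Matrix.cons_val_two, Matrix.tail_cons,
    Matrix.cons_val_four, Matrix.cons_val_succ] at h0 h1 h2 h4
  -- h4 : v 0 ^ 2 = c * 1, h2 : v 0 * v 1 = c * a,
  -- h1 : v 0 * v 2 + 2 * (v 1 * v 3) = c * -b, h0 : v 1 * v 2 + 2*(v 0 * v 4) = c * (a*b)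
  have hv0 : v 0 ≠ 0 := by
    intro h
    rw [h] at h4
    simp at h4
    exact hc h4.symm
  rw [SetLike.mem_coe, mem_span_iff]
  have hc' : c = v 0 ^ 2 := by rw [h4]; ring
  subst hc'
  have e1 : v 1 = a * v 0 :=
    mul_left_cancel₀ hv0 (h2.trans (by ring) : v 0 * v 1 = v 0 * (a * v 0))
  have e2 : v 2 = -(b * v 0) - 2 * (a * v 3) := by
    apply mul_left_cancel₀ hv0
    rw [e1] at h1
    linear_combination h1
  have e4 : v 4 = a * b * v 0 + a ^ 2 * v 3 := by
    apply mul_left_cancel₀ hv0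
    rw [e1, e2] at h0
    linear_combination (1/2 : ℂ) * h0
  exact ⟨e1, e2, e4⟩

lemma isAlg_conic :
    IsAlg ({v : Fin 5 → ℂ | v 0 = 0 ∧ v 1 = 0 ∧ (v 2) ^ 2 = 4 * (v 3 * v 4)}) := by
  refine ⟨{MvPolynomial.X 0, MvPolynomial.X 1,
    MvPolynomial.X 2 ^ 2 - MvPolynomial.C 4 * (MvPolynomial.X 3 * MvPolynomial.X 4)}, ?_⟩
  ext v
  simp only [zLocus, Set.mem_insert_iff, Set.mem_singleton_iff, Set.mem_setOf_eq,
    forall_eq_or_imp, forall_eq, map_sub, map_mul, map_pow, eval_C, eval_X]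
  constructor
  · rintro ⟨h1, h2, h3⟩; exact ⟨h1, h2, by linear_combination h3⟩
  · rintro ⟨h1, h2, h3⟩; exact ⟨h1, h2, by linear_combination h3⟩

/-- the closure of a general fiber of the Gauss map of the Perazzo
cubic is the line `[t:u] ↦ [t : at : −bt−2au : u : abt+a²u]` (for general `(a,b)`
it is exactly the fiber over the tangent hyperplane with coordinates
`(ab, −b, a, a², 1)`, and it meets the singular plane exactly in the point
`[0:0:−2a:1:a²]`); the locus of these intersection points is the conic
`{x₂² = 4x₃x₄}` inside the plane `Sing(X) = {x₀ = x₁ = 0}`. -/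
theorem stmt6 :
    -- each such line lies on the cubic
    (∀ a b t u : ℂ, MvPolynomial.eval (perazzoLine a b t u) perazzoCubic = 0) ∧
    -- the Gauss map contracts each such line: the gradient along the line is
    -- proportional to the fixed covector `(ab, −b, a, a², 1)`
    (∀ a b t u : ℂ, gradP perazzoCubic (perazzoLine a b t u)
        = (t ^ 2) • (![a * b, -b, a, a ^ 2, 1] : Fin 5 → ℂ)) ∧
    -- for general `(a,b)`, the closure of the Gauss fiber is exactly that line,
    -- and it meets the singular locus exactly in the ray of `[0:0:−2a:1:a²]`
    (∃ B : Set (Fin 2 → ℂ), IsAlg B ∧ B ≠ Set.univ ∧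
      ∀ ab : Fin 2 → ℂ, ab ∉ B →
        zcl {v : Fin 5 → ℂ | MvPolynomial.eval v perazzoCubic = 0 ∧
            ∃ c : ℂ, c ≠ 0 ∧ gradP perazzoCubic v
              = c • (![ab 0 * ab 1, -(ab 1), ab 0, (ab 0) ^ 2, 1] : Fin 5 → ℂ)}
          = ↑(Submodule.span ℂ {perazzoLine (ab 0) (ab 1) 1 0,
              perazzoLine (ab 0) (ab 1) 0 1}) ∧
        ∀ v ∈ Submodule.span ℂ {perazzoLine (ab 0) (ab 1) 1 0,
            perazzoLine (ab 0) (ab 1) 0 1},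
          ((∀ i, MvPolynomial.eval v (MvPolynomial.pderiv i perazzoCubic) = 0) ↔
            ∃ c : ℂ, v = c • (![0, 0, -(2 * ab 0), 1, (ab 0) ^ 2] : Fin 5 → ℂ))) ∧
    -- the locus of all these intersection points is the conic `x₂² = 4x₃x₄`
    -- in the plane `{x₀ = x₁ = 0}`
    zcl {v : Fin 5 → ℂ | ∃ a u : ℂ,
        v = u • (![0, 0, -(2 * a), 1, a ^ 2] : Fin 5 → ℂ)}
      = {v : Fin 5 → ℂ | v 0 = 0 ∧ v 1 = 0 ∧ (v 2) ^ 2 = 4 * (v 3 * v 4)} := by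
  refine ⟨eval_line, grad_line, ?_, ?_⟩
  · -- part 3
    refine ⟨∅, ⟨{1}, ?_⟩, ?_, ?_⟩
    · ext x; simp [zLocus]
    · intro h
      have : (fun _ => (0:ℂ)) ∈ (∅ : Set (Fin 2 → ℂ)) := h ▸ Set.mem_univ _
      exact this
    · intro ab _
      set a := ab 0
      set b := ab 1
      have hneg : (![a * b, -b, a, a ^ 2, 1] : Fin 5 → ℂ)
          = ![a * b, -b, a, a ^ 2, 1] := rfl
      constructor
      · -- zcl of fiber = span
        apply Set.Subset.antisymm
        · apply zcl_subset (isAlg_span a b)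
          exact fun v hv => fiber_subset_span a b hv
        · intro v hv
          rw [SetLike.mem_coe, Submodule.mem_span_pair] at hv
          obtain ⟨t, u, rfl⟩ := hv
          have hline : t • perazzoLine a b 1 0 + u • perazzoLine a b 0 1
              = perazzoLine a b t u := (perazzoLine_eq a b t u).symm
          rw [hline]
          rintro T ⟨⟨I, rfl⟩, hST⟩
          intro f hf
          have key : ∀ s : ℂ, MvPolynomial.eval
              (fun i => Polynomial.eval s
                (Polynomial.C (perazzoLine a b 1 0 i) * Polynomial.X
                  + Polynomial.C (u * perazzoLine a b 0 1 i))) f = 0 := by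
            apply eval_poly_zero
            intro s hs
            have heq : (fun i => Polynomial.eval s
                (Polynomial.C (perazzoLine a b 1 0 i) * Polynomial.X
                  + Polynomial.C (u * perazzoLine a b 0 1 i))) = perazzoLine a b s u := by
              funext i
              fin_cases i <;> simp [perazzoLine] <;> ring
            rw [heq]
            apply hST _ _ hf
            exact ⟨eval_line a b s u, s ^ 2, pow_ne_zero _ hs, grad_line a b s u⟩
          have := key t
          have heqt : (fun i => Polynomial.eval t
              (Polynomial.C (perazzoLine a b 1 0 i) * Polynomial.X
                + Polynomial.C (u * perazzoLine a b 0 1 i))) = perazzoLine a b t u := by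
            funext i
            fin_cases i <;> simp [perazzoLine] <;> ring
          rwa [heqt] at this
      · -- singular locus intersection
        intro v hv
        rw [Submodule.mem_span_pair] at hv
        obtain ⟨t, u, rfl⟩ := hv
        rw [← perazzoLine_eq]
        constructor
        · intro hsing
          have h4 := hsing 4
          have : MvPolynomial.eval (perazzoLine a b t u) (MvPolynomial.pderiv 4 perazzoCubic)
              = gradP perazzoCubic (perazzoLine a b t u) 4 := rfl
          rw [this, grad_line] at h4
          simp at h4
          subst h4
          refine ⟨u, ?_⟩
          funext i; fin_cases i <;> simp [perazzoLine] <;> ring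
        · rintro ⟨c, hc⟩
          have : perazzoLine a b t u = perazzoLine a b 0 c := by
            rw [hc]; funext i; fin_cases i <;> simp [perazzoLine] <;> ring
          rw [this]
          intro i
          have : MvPolynomial.eval (perazzoLine a b 0 c) (MvPolynomial.pderiv i perazzoCubic)
              = gradP perazzoCubic (perazzoLine a b 0 c) i := rfl
          rw [this, grad_line]
          simp
  · -- part 4
    apply Set.Subset.antisymm
    · apply zcl_subset isAlg_conic
      rintro v ⟨a, u, rfl⟩
      refine ⟨by simp, by simp, by simp; ring⟩
    · rintro v ⟨h0, h1, h2⟩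
      by_cases h3 : v 3 = 0
      · -- degenerate case: v = (0,0,0,0,v4), use curve s ↦ (0,0,-2 v4 s, v4 s², v4)
        have hv2 : v 2 = 0 := by
          have : v 2 ^ 2 = 0 := by rw [h2, h3]; ring
          exact pow_eq_zero_iff (by norm_num) |>.mp this
        rintro T ⟨⟨I, rfl⟩, hST⟩
        intro f hf
        set g : Fin 5 → Polynomial ℂ :=
          ![0, 0, Polynomial.C (-2 * v 4) * Polynomial.X,
            Polynomial.C (v 4) * Polynomial.X ^ 2, Polynomial.C (v 4)] with hg
        have key : ∀ s : ℂ, MvPolynomial.eval (fun i => Polynomial.eval s (g i)) f = 0 := by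
          apply eval_poly_zero
          intro s hs
          apply hST _ _ hf
          refine ⟨1 / s, v 4 * s ^ 2, ?_⟩
          funext i
          fin_cases i <;>
            simp [hg] <;> field_simp <;> ring
        have := key 0
        have heq : (fun i => Polynomial.eval (0:ℂ) (g i)) = v := by
          funext i
          fin_cases i <;> simp [hg, h0, h1, hv2, h3]
        rwa [heq] at this
      · apply subset_zcl
        refine ⟨-(v 2) / (2 * v 3), v 3, ?_⟩
        funext i
        fin_cases i
        · simp [h0]
        · simp [h1]
        · show v 2 = v 3 * -(2 * (-(v 2) / (2 * v 3)))
          field_simp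
        · show v 3 = v 3 * 1
          ring
        · show v 4 = v 3 * (-(v 2) / (2 * v 3)) ^ 2
          field_simp
          linear_combination -h2
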